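/- Let T : C → C be a (b, k)-enriched strictly pseudocontractive mapping, λ = 1/(b + 1), and 0 < t < 1 − k. Then the mapping x ↦ (1 − λt)x + λt·Tx is nonexpansive on C. -/

import Mathlib

lemma expand_smul_sq {H : Type*} [NormedAddCommGroup H] [InnerProductSpace ℝ H]
    (a c : ℝ) (u v : H) :
    ‖a • u + c • v‖ ^ 2 =
      a ^ 2 * ‖u‖ ^ 2 + 2 * (a * c) * (inner ℝ u v : ℝ) + c ^ 2 * ‖v‖ ^ 2 := by
  rw [norm_add_sq_real, norm_smul, norm_smul, real_inner_smul_left, real_inner_smul_right,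
    Real.norm_eq_abs, Real.norm_eq_abs, mul_pow, mul_pow, sq_abs, sq_abs]
  ring

theorem enriched_averaged_nonexpansive
    {H : Type*} [NormedAddCommGroup H] [InnerProductSpace ℝ H] [CompleteSpace H]
    (C : Set H) (hC : Convex ℝ C) (T : H → H) (hT : Set.MapsTo T C C)
    (b k : ℝ) (hb : 0 ≤ b) (hk0 : 0 ≤ k) (hk1 : k < 1)
    (hespc : ∀ x ∈ C, ∀ y ∈ C,
      ‖b • (x - y) + (T x - T y)‖ ^ 2 ≤
        (b + 1) ^ 2 * ‖x - y‖ ^ 2 + k * ‖x - y - (T x - T y)‖ ^ 2)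
    (lam : ℝ) (hlam : lam = 1 / (b + 1))
    (t : ℝ) (ht0 : 0 < t) (ht1 : t < 1 - k) :
    ∀ x ∈ C, ∀ y ∈ C,
      ‖((1 - lam * t) • x + (lam * t) • T x) - ((1 - lam * t) • y + (lam * t) • T y)‖
        ≤ ‖x - y‖ := by
  intro x hx y hy
  have hb1 : (0:ℝ) < b + 1 := by linarith
  have hdiff : ((1 - lam * t) • x + (lam * t) • T x) - ((1 - lam * t) • y + (lam * t) • T y)
      = (1 - lam * t) • (x - y) + (lam * t) • (T x - T y) := by
    simp only [smul_sub]; abel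
  rw [hdiff]
  set u : H := x - y with hu
  set v : H := T x - T y with hv
  set U : ℝ := ‖u‖ ^ 2 with hU
  set V : ℝ := ‖v‖ ^ 2 with hV
  set P : ℝ := (inner ℝ u v : ℝ) with hP
  have hUnn : 0 ≤ U := by rw [hU]; positivity
  have hEuv : ‖u - v‖ ^ 2 = U - 2 * P + V := by
    have h1 : u - v = (1:ℝ) • u + (-1 : ℝ) • v := by
      rw [one_smul, neg_one_smul, sub_eq_add_neg]
    rw [h1, expand_smul_sq, hU, hV, hP]; ring
  have hB : 0 ≤ U - 2 * P + V := hEuv ▸ sq_nonneg ‖u - v‖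
  have hEbv : ‖b • u + v‖ ^ 2 = b ^ 2 * U + 2 * b * P + V := by
    have h1 : b • u + v = b • u + (1:ℝ) • v := by rw [one_smul]
    rw [h1, expand_smul_sq, hU, hV, hP]; ring
  have hyp := hespc x hx y hy
  rw [← hu, ← hv, ← hU, hEuv, hEbv] at hyp
  -- hyp : b^2*U + 2*b*P + V ≤ (b+1)^2*U + k*(U - 2*P + V)
  have key : (b + 1 - t) ^ 2 * U + 2 * (b + 1 - t) * t * P + t ^ 2 * V ≤ (b + 1) ^ 2 * U := by
    nlinarith [mul_le_mul_of_nonneg_left hyp ht0.le,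
      mul_nonneg (mul_nonneg ht0.le (by linarith : (0:ℝ) ≤ 1 - t - k)) hB,
      mul_nonneg (mul_nonneg hk0 ht0.le) hUnn]
  have hl1 : lam * (b + 1) = 1 := by
    rw [hlam]; field_simp
  have h1t : 1 - lam * t = lam * (b + 1 - t) := by
    have h : lam * (b + 1 - t) = lam * (b + 1) - lam * t := by ring
    rw [h, hl1]
  have h3 : lam ^ 2 * ((b + 1) ^ 2 * U) = U := by
    have h : lam ^ 2 * (b + 1) ^ 2 = 1 := by
      calc lam ^ 2 * (b + 1) ^ 2 = (lam * (b + 1)) ^ 2 := by ring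
        _ = 1 := by rw [hl1]; norm_num
    calc lam ^ 2 * ((b + 1) ^ 2 * U) = (lam ^ 2 * (b + 1) ^ 2) * U := by ring
      _ = U := by rw [h, one_mul]
  have hsq : ‖(1 - lam * t) • u + (lam * t) • v‖ ^ 2 ≤ U := by
    rw [expand_smul_sq, h1t, ← hU, ← hV, ← hP]
    have h2 := mul_le_mul_of_nonneg_left key (sq_nonneg lam)
    have h4 : (lam * (b + 1 - t)) ^ 2 * U + 2 * ((lam * (b + 1 - t)) * (lam * t)) * P
        + (lam * t) ^ 2 * V
        = lam ^ 2 * ((b + 1 - t) ^ 2 * U + 2 * (b + 1 - t) * t * P + t ^ 2 * V) := by ring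
    linarith [h2, h3, h4.ge, h4.le]
  exact le_of_pow_le_pow_left₀ two_ne_zero (norm_nonneg u) (by rw [hU] at hsq; exact hsq)
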